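/- Let λ = 15/17 and let d₁, d₂ be decision rules with d₁(N,N) = d₂(N,N) = 0, d₁(N,j) = a11 for j ∈ {2, …, N-2} \ {N-3}, d₁(N,N-3) = a12, d₂(N,j) = a11 for j ∈ {N-2, N-4}, and d₂(N,j) = a12 for j ∈ {2, …, N-5} ∪ {N-3}. Then v^{d₁}_{15/17}(N,j) = v^{d₂}_{15/17}(N,j) for every j ∈ {2, …, N-2} ∪ {N}, irrespective of the actions d₁ and d₂ take at states not of the form (N,j). -/
import Mathlib


namespace AuxMDP

/-- The action labels of the auxiliary MDP. -/
inductive Lab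
  | a11 | a12 | a21 | a22 | a11p | a12p | a21p | a22p | a0 | atil | zero
  deriving DecidableEq

/-- Side lengths in `{2, …, N-2} ∪ {N}`. -/
def goodIdx (N i : ℕ) : Prop := (2 ≤ i ∧ i ≤ N - 2) ∨ i = N

instance (N i : ℕ) : Decidable (goodIdx N i) := by unfold goodIdx; infer_instance

/-- The state space `Ŝ` of the auxiliary MDP. -/
def ShatP (N : ℕ) (s : ℕ × ℕ) : Prop :=
  (goodIdx N s.1 ∧ goodIdx N s.2) ∨ s = (0, 0)

instance (N : ℕ) (s : ℕ × ℕ) : Decidable (ShatP N s) := by unfold ShatP; infer_instance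

/-- The state space as a `Finset`. -/
def ShatF (N : ℕ) : Finset (ℕ × ℕ) :=
  (Finset.range (N + 1) ×ˢ Finset.range (N + 1)).filter (ShatP N)

/-- The admissible action set `Â(s)`. -/
def ActOK (N : ℕ) (s : ℕ × ℕ) (a : Lab) : Prop :=
  if s = (0, 0) ∨ s = (N, N) then a = Lab.zero
  else
    match a with
    | Lab.zero => True
    | Lab.a11 => 3 ≤ s.1 ∧ s.2 ≤ N - 2
    | Lab.a12 => 3 ≤ s.1 ∧ s.2 ≤ N - 3
    | Lab.a11p => s.1 ≤ N - 2 ∧ s.2 ≤ N - 2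
    | Lab.a12p => s.1 ≤ N - 2 ∧ s.2 ≤ N - 3
    | Lab.a21 => 3 ≤ s.2 ∧ s.1 ≤ N - 2
    | Lab.a22 => 3 ≤ s.2 ∧ s.1 ≤ N - 3
    | Lab.a21p => s.2 ≤ N - 2 ∧ s.1 ≤ N - 2
    | Lab.a22p => s.2 ≤ N - 2 ∧ s.1 ≤ N - 3
    | Lab.a0 => s.1 ≤ N - 2 ∧ s.2 ≤ N - 2
    | Lab.atil => s.1 ≤ N - 2 ∧ s.2 ≤ N - 2

/-- Kernel of the action `a11` (flip at distance 1 from the horizontal side,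
away from the corners). -/
noncomputable def ker11 (N : ℕ) (s s' : ℕ × ℕ) : ℝ :=
  if s.2 ≤ N - 3 then
    (if s' = s then 1/3 else if s' = (s.1, s.2 + 1) then 2/3 else 0)
  else if s.2 = N - 2 then
    (if s' = s then 1/4 else if s' = (s.1, N) then 3/4 else 0)
  else 0

/-- Kernel of the action `a11'`. -/
noncomputable def ker11p (N : ℕ) (s s' : ℕ × ℕ) : ℝ :=
  if s.2 ≤ N - 3 then
    (if s' = s then 1/2 else if s' = (s.1, s.2 + 1) then 1/2 else 0)
  else if s.2 = N - 2 then
    (if s' = s then 1/3 else if s' = (s.1, N) then 2/3 else 0)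
  else 0

/-- Kernel of the action `a12`. -/
noncomputable def ker12 (N : ℕ) (s s' : ℕ × ℕ) : ℝ :=
  if s.2 ≤ N - 4 then
    (if s' = s then 5/9 else if s' = (s.1, s.2 + 1) then 7/27
     else if s' = (s.1, s.2 + 2) then 5/27 else 0)
  else if s.2 = N - 3 then
    (if s' = s then 7/18 else if s' = (s.1, N - 2) then 31/144
     else if s' = (s.1, N) then 19/48 else 0)
  else 0

/-- Kernel of the action `a12'`. -/
noncomputable def ker12p (N : ℕ) (s s' : ℕ × ℕ) : ℝ :=
  if s.2 ≤ N - 4 then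
    (if s' = s then 5/8 else if s' = (s.1, s.2 + 1) then 1/4
     else if s' = (s.1, s.2 + 2) then 1/8 else 0)
  else if s.2 = N - 3 then
    (if s' = s then 4/9 else if s' = (s.1, N - 2) then 5/27
     else if s' = (s.1, N) then 10/27 else 0)
  else 0

/-- Kernel of the action `a0` (diagonal flip). -/
noncomputable def ker0 (N : ℕ) (s s' : ℕ × ℕ) : ℝ :=
  if s.1 ≤ N - 3 ∧ s.2 ≤ N - 3 then
    (if s' = s then 4/9 else if s' = (s.1 + 1, s.2) then 1/9
     else if s' = (s.1, s.2 + 1) then 1/9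
     else if s' = (s.1 + 1, s.2 + 1) then 1/3 else 0)
  else if s.1 ≤ N - 3 ∧ s.2 = N - 2 then
    (if s' = s then 5/12 else if s' = (s.1, N) then 1/8
     else if s' = (s.1 + 1, N - 2) then 1/9
     else if s' = (s.1 + 1, N) then 25/72 else 0)
  else if s.1 = N - 2 ∧ s.2 ≤ N - 3 then
    (if s' = s then 5/12 else if s' = (N, s.2) then 1/8
     else if s' = (N - 2, s.2 + 1) then 1/9
     else if s' = (N, s.2 + 1) then 25/72 else 0)
  else if s.1 = N - 2 ∧ s.2 = N - 2 then
    (if s' = s then 7/18 else if s' = (N, N - 2) then 1/8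
     else if s' = (N - 2, N) then 1/8
     else if s' = (N, N) then 13/36 else 0)
  else 0

/-- Kernel of the action `ã` (flip a corner spin of the rectangle). -/
noncomputable def kerTil (N : ℕ) (s s' : ℕ × ℕ) : ℝ :=
  if 3 ≤ s.1 ∧ 3 ≤ s.2 then (if s' = s then 1 else 0)
  else if s.1 = 2 ∧ 3 ≤ s.2 then
    (if s' = s then 1/2 else if s' = (2, s.2 - 1) then 1/2 else 0)
  else if 3 ≤ s.1 ∧ s.2 = 2 then
    (if s' = s then 1/2 else if s' = (s.1 - 1, 2) then 1/2 else 0)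
  else if s.1 = 2 ∧ s.2 = 2 then
    (if s' = s then 1/3 else if s' = ((0 : ℕ), (0 : ℕ)) then 2/3 else 0)
  else 0

/-- Coordinate swap. -/
def swp (s : ℕ × ℕ) : ℕ × ℕ := (s.2, s.1)

/-- The transition kernel `P̂(s' | s, a)` of the auxiliary MDP. -/
noncomputable def Phat (N : ℕ) (s : ℕ × ℕ) (a : Lab) (s' : ℕ × ℕ) : ℝ :=
  match a with
  | Lab.zero => if s' = s then 1 else 0
  | Lab.a11 => ker11 N s s'
  | Lab.a12 => ker12 N s s'
  | Lab.a11p => ker11p N s s'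
  | Lab.a12p => ker12p N s s'
  | Lab.a21 => ker11 N (swp s) (swp s')
  | Lab.a22 => ker12 N (swp s) (swp s')
  | Lab.a21p => ker11p N (swp s) (swp s')
  | Lab.a22p => ker12p N (swp s) (swp s')
  | Lab.a0 => ker0 N s s'
  | Lab.atil => kerTil N s s'

/-- The reward function of the auxiliary MDP. -/
noncomputable def rhat (N : ℕ) (s : ℕ × ℕ) : ℝ := if s = (N, N) then 1 else 0

/-- `d` is a decision rule: it selects admissible actions on `Ŝ`. -/
def IsRule (N : ℕ) (d : ℕ × ℕ → Lab) : Prop :=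
  ∀ s : ℕ × ℕ, ShatP N s → ActOK N s (d s)

/-- `v` is the value function of the decision rule `d` (the unique solution
of the evaluation equations on `Ŝ`). -/
def IsValue (N : ℕ) (lam : ℝ) (d : ℕ × ℕ → Lab) (v : ℕ × ℕ → ℝ) : Prop :=
  ∀ s ∈ ShatF N, v s = rhat N s + lam * ∑ s' ∈ ShatF N, Phat N s (d s) s' * v s'

/-- `d` is an optimal decision rule: its value function dominates the value
function of every decision rule at every state of `Ŝ`. -/
def IsOptimal (N : ℕ) (lam : ℝ) (d : ℕ × ℕ → Lab) : Prop :=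
  IsRule N d ∧
  ∀ vd : ℕ × ℕ → ℝ, IsValue N lam d vd →
    ∀ d' : ℕ × ℕ → Lab, IsRule N d' →
      ∀ v' : ℕ × ℕ → ℝ, IsValue N lam d' v' →
        ∀ s : ℕ × ℕ, ShatP N s → v' s ≤ vd s


lemma mem_ShatF {N : ℕ} (hN : 7 ≤ N) {j : ℕ} (h : (2 ≤ j ∧ j ≤ N - 2) ∨ j = N) :
    ((N, j) : ℕ × ℕ) ∈ ShatF N := by
  simp only [ShatF, Finset.mem_filter, Finset.mem_product, Finset.mem_range]
  exact ⟨⟨by omega, by omega⟩, Or.inl ⟨Or.inr rfl, h⟩⟩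

lemma sum_one {F : Finset (ℕ × ℕ)} {f : ℕ × ℕ → ℝ} {p : ℕ × ℕ} (hp : p ∈ F)
    (h : ∀ x, x ≠ p → f x = 0) : ∑ x ∈ F, f x = f p :=
  Finset.sum_eq_single_of_mem p hp (fun x _ hx => h x hx)

lemma sum_two {F : Finset (ℕ × ℕ)} {f : ℕ × ℕ → ℝ} {p q : ℕ × ℕ}
    (hp : p ∈ F) (hq : q ∈ F) (hpq : p ≠ q)
    (h : ∀ x, x ≠ p → x ≠ q → f x = 0) : ∑ x ∈ F, f x = f p + f q := by
  have hsub : ({p, q} : Finset (ℕ × ℕ)) ⊆ F := by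
    intro x hx; simp at hx; rcases hx with h | h <;> simp [h, hp, hq]
  rw [← Finset.sum_subset hsub (by intro x _ hx; simp at hx; exact h x hx.1 hx.2)]
  rw [Finset.sum_pair hpq]

lemma sum_three {F : Finset (ℕ × ℕ)} {f : ℕ × ℕ → ℝ} {p q r : ℕ × ℕ}
    (hp : p ∈ F) (hq : q ∈ F) (hr : r ∈ F)
    (hpq : p ≠ q) (hpr : p ≠ r) (hqr : q ≠ r)
    (h : ∀ x, x ≠ p → x ≠ q → x ≠ r → f x = 0) :
    ∑ x ∈ F, f x = f p + f q + f r := by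
  have hsub : ({p, q, r} : Finset (ℕ × ℕ)) ⊆ F := by
    intro x hx; simp at hx; rcases hx with h | h | h <;> simp [h, hp, hq, hr]
  rw [← Finset.sum_subset hsub
      (by intro x _ hx; simp at hx; exact h x hx.1 hx.2.1 hx.2.2)]
  rw [Finset.sum_insert (by simp [hpq, hpr]), Finset.sum_pair hqr, add_assoc]

lemma eq_zeroAct {N : ℕ} (hN : 7 ≤ N) {d : ℕ × ℕ → Lab} {v : ℕ × ℕ → ℝ}
    (hv : IsValue N (15/17) d v) (hd : d (N, N) = Lab.zero) :
    v (N, N) = 17/2 := by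
  have h := hv (N, N) (mem_ShatF hN (Or.inr rfl))
  rw [hd] at h
  rw [sum_one (p := ((N : ℕ), N)) (mem_ShatF hN (Or.inr rfl))
      (by intro x hx; simp [Phat, hx])] at h
  simp only [Phat, if_pos rfl, rhat, one_mul, if_true] at h
  norm_num at h
  linarith

lemma eq_a11_mid {N : ℕ} (hN : 7 ≤ N) {d : ℕ × ℕ → Lab} {v : ℕ × ℕ → ℝ}
    (hv : IsValue N (15/17) d v) {j : ℕ} (hj2 : 2 ≤ j) (hj : j ≤ N - 3)
    (hd : d (N, j) = Lab.a11) :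
    v (N, j) = 5/6 * v (N, j + 1) := by
  have h := hv (N, j) (mem_ShatF hN (Or.inl ⟨hj2, by omega⟩))
  rw [hd] at h
  have hne : ((N, j) : ℕ × ℕ) ≠ (N, j + 1) := by
    simp only [ne_eq, Prod.mk.injEq]; omega
  rw [sum_two (p := ((N : ℕ), j)) (q := ((N : ℕ), j + 1))
      (mem_ShatF hN (Or.inl ⟨hj2, by omega⟩))
      (mem_ShatF hN (Or.inl ⟨by omega, by omega⟩)) hne
      (by intro x hx1 hx2; simp [Phat, ker11, hj, hx1, hx2])] at h
  have hr : rhat N ((N : ℕ), j) = 0 := by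
    have : j ≠ N := by omega
    simp [rhat, Prod.ext_iff, this]
  have h1 : Phat N (N, j) Lab.a11 (N, j) = 1/3 := by simp [Phat, ker11, hj]
  have h2 : Phat N (N, j) Lab.a11 (N, j + 1) = 2/3 := by
    simp [Phat, ker11, hj, hne.symm]
  rw [hr, h1, h2] at h
  linarith

lemma eq_a11_top {N : ℕ} (hN : 7 ≤ N) {d : ℕ × ℕ → Lab} {v : ℕ × ℕ → ℝ}
    (hv : IsValue N (15/17) d v) (hd : d (N, N - 2) = Lab.a11) :
    v (N, N - 2) = 15/17 * (1/4 * v (N, N - 2) + 3/4 * v (N, N)) := by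
  have hmem : ((N, N - 2) : ℕ × ℕ) ∈ ShatF N :=
    mem_ShatF hN (Or.inl ⟨by omega, le_refl _⟩)
  have h := hv (N, N - 2) hmem
  rw [hd] at h
  have hb1 : ¬ (N - 2 ≤ N - 3) := by omega
  have hne : ((N, N - 2) : ℕ × ℕ) ≠ (N, N) := by
    simp only [ne_eq, Prod.mk.injEq]; omega
  rw [sum_two (p := ((N : ℕ), N - 2)) (q := ((N : ℕ), N)) hmem
      (mem_ShatF hN (Or.inr rfl)) hne
      (by intro x hx1 hx2; simp [Phat, ker11, hb1, hx1, hx2])] at h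
  have hr : rhat N ((N : ℕ), N - 2) = 0 := by
    have : N - 2 ≠ N := by omega
    simp [rhat, Prod.ext_iff, this]
  have h1 : Phat N (N, N - 2) Lab.a11 (N, N - 2) = 1/4 := by
    simp [Phat, ker11, hb1]
  have h2 : Phat N (N, N - 2) Lab.a11 (N, N) = 3/4 := by
    simp [Phat, ker11, hb1, hne.symm]
  rw [hr, h1, h2] at h
  linarith

lemma eq_a12_mid {N : ℕ} (hN : 7 ≤ N) {d : ℕ × ℕ → Lab} {v : ℕ × ℕ → ℝ}
    (hv : IsValue N (15/17) d v) {j : ℕ} (hj2 : 2 ≤ j) (hj : j ≤ N - 4)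
    (hd : d (N, j) = Lab.a12) :
    v (N, j) = 15/17 * (5/9 * v (N, j) + 7/27 * v (N, j + 1)
      + 5/27 * v (N, j + 2)) := by
  have h := hv (N, j) (mem_ShatF hN (Or.inl ⟨hj2, by omega⟩))
  rw [hd] at h
  have hne1 : ((N, j) : ℕ × ℕ) ≠ (N, j + 1) := by
    simp only [ne_eq, Prod.mk.injEq]; omega
  have hne2 : ((N, j) : ℕ × ℕ) ≠ (N, j + 2) := by
    simp only [ne_eq, Prod.mk.injEq]; omega
  have hne3 : ((N, j + 1) : ℕ × ℕ) ≠ (N, j + 2) := by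
    simp only [ne_eq, Prod.mk.injEq]; omega
  rw [sum_three (p := ((N : ℕ), j)) (q := ((N : ℕ), j + 1)) (r := ((N : ℕ), j + 2))
      (mem_ShatF hN (Or.inl ⟨hj2, by omega⟩))
      (mem_ShatF hN (Or.inl ⟨by omega, by omega⟩))
      (mem_ShatF hN (Or.inl ⟨by omega, by omega⟩)) hne1 hne2 hne3
      (by intro x hx1 hx2 hx3; simp [Phat, ker12, hj, hx1, hx2, hx3])] at h
  have hr : rhat N ((N : ℕ), j) = 0 := by
    have : j ≠ N := by omega
    simp [rhat, Prod.ext_iff, this]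
  have h1 : Phat N (N, j) Lab.a12 (N, j) = 5/9 := by simp [Phat, ker12, hj]
  have h2 : Phat N (N, j) Lab.a12 (N, j + 1) = 7/27 := by
    simp [Phat, ker12, hj, hne1.symm]
  have h3 : Phat N (N, j) Lab.a12 (N, j + 2) = 5/27 := by
    simp [Phat, ker12, hj, hne2.symm, hne3.symm]
  rw [hr, h1, h2, h3] at h
  linarith

lemma eq_a12_top {N : ℕ} (hN : 7 ≤ N) {d : ℕ × ℕ → Lab} {v : ℕ × ℕ → ℝ}
    (hv : IsValue N (15/17) d v) (hd : d (N, N - 3) = Lab.a12) :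
    v (N, N - 3) = 15/17 * (7/18 * v (N, N - 3) + 31/144 * v (N, N - 2)
      + 19/48 * v (N, N)) := by
  have hmem : ((N, N - 3) : ℕ × ℕ) ∈ ShatF N :=
    mem_ShatF hN (Or.inl ⟨by omega, by omega⟩)
  have h := hv (N, N - 3) hmem
  rw [hd] at h
  have hb1 : ¬ (N - 3 ≤ N - 4) := by omega
  have hne1 : ((N, N - 3) : ℕ × ℕ) ≠ (N, N - 2) := by
    simp only [ne_eq, Prod.mk.injEq]; omega
  have hne2 : ((N, N - 3) : ℕ × ℕ) ≠ (N, N) := by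
    simp only [ne_eq, Prod.mk.injEq]; omega
  have hne3 : ((N, N - 2) : ℕ × ℕ) ≠ (N, N) := by
    simp only [ne_eq, Prod.mk.injEq]; omega
  rw [sum_three (p := ((N : ℕ), N - 3)) (q := ((N : ℕ), N - 2)) (r := ((N : ℕ), N)) hmem
      (mem_ShatF hN (Or.inl ⟨by omega, le_refl _⟩))
      (mem_ShatF hN (Or.inr rfl)) hne1 hne2 hne3
      (by intro x hx1 hx2 hx3; simp [Phat, ker12, hb1, hx1, hx2, hx3])] at h
  have hr : rhat N ((N : ℕ), N - 3) = 0 := by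
    have : N - 3 ≠ N := by omega
    simp [rhat, Prod.ext_iff, this]
  have h1 : Phat N (N, N - 3) Lab.a12 (N, N - 3) = 7/18 := by
    simp [Phat, ker12, hb1]
  have h2 : Phat N (N, N - 3) Lab.a12 (N, N - 2) = 31/144 := by
    simp [Phat, ker12, hb1, hne1.symm]
  have h3 : Phat N (N, N - 3) Lab.a12 (N, N) = 19/48 := by
    simp [Phat, ker12, hb1, hne2.symm, hne3.symm]
  rw [hr, h1, h2, h3] at h
  linarith


/-- at the critical discount factor `λ_c = 15/17`, the two decision
rules `d₁` (flip at distance 1 along the top row states, except at `(N, N-3)`)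
and `d₂` (flip at distance 2, except at `(N, N-2)` and `(N, N-4)`) have the same
value at every state `(N, j)`, irrespective of their actions elsewhere. -/
theorem values_agree_at_critical_lambda (N : ℕ) (hN : 7 ≤ N)
    (d₁ d₂ : ℕ × ℕ → Lab) (h₁ : IsRule N d₁) (h₂ : IsRule N d₂)
    (hd₁N : d₁ (N, N) = Lab.zero) (hd₂N : d₂ (N, N) = Lab.zero)
    (hd₁a : ∀ j : ℕ, 2 ≤ j → j ≤ N - 2 → j ≠ N - 3 → d₁ (N, j) = Lab.a11)
    (hd₁b : d₁ (N, N - 3) = Lab.a12)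
    (hd₂a : ∀ j : ℕ, j = N - 2 ∨ j = N - 4 → d₂ (N, j) = Lab.a11)
    (hd₂b : ∀ j : ℕ, (2 ≤ j ∧ j ≤ N - 5) ∨ j = N - 3 → d₂ (N, j) = Lab.a12)
    (v₁ v₂ : ℕ × ℕ → ℝ)
    (hv₁ : IsValue N (15/17) d₁ v₁) (hv₂ : IsValue N (15/17) d₂ v₂) :
    ∀ j : ℕ, ((2 ≤ j ∧ j ≤ N - 2) ∨ j = N) → v₁ (N, j) = v₂ (N, j) := by
  -- values at (N, N)
  have hA : v₁ (N, N) = 17/2 := eq_zeroAct hN hv₁ hd₁N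
  have hB : v₂ (N, N) = 17/2 := eq_zeroAct hN hv₂ hd₂N
  -- values at (N, N-2)
  have hA2 : v₁ (N, N - 2) = 765/106 := by
    have h := eq_a11_top hN hv₁ (hd₁a (N - 2) (by omega) (le_refl _) (by omega))
    rw [hA] at h; linarith
  have hB2 : v₂ (N, N - 2) = 765/106 := by
    have h := eq_a11_top hN hv₂ (hd₂a (N - 2) (Or.inl rfl))
    rw [hB] at h; linarith
  -- values at (N, N-3)
  have hA3 := eq_a12_top hN hv₁ hd₁b
  have hB3 := eq_a12_top hN hv₂ (hd₂b (N - 3) (Or.inr rfl))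
  have h3 : v₁ (N, N - 3) = v₂ (N, N - 3) := by
    rw [hA, hA2] at hA3; rw [hB, hB2] at hB3; linarith
  -- values at (N, N-4)
  have h4 : v₁ (N, N - 4) = v₂ (N, N - 4) := by
    have hA4 := eq_a11_mid hN hv₁ (j := N - 4) (by omega) (by omega)
      (hd₁a (N - 4) (by omega) (by omega) (by omega))
    have hB4 := eq_a11_mid hN hv₂ (j := N - 4) (by omega) (by omega)
      (hd₂a (N - 4) (Or.inr rfl))
    have e : N - 4 + 1 = N - 3 := by omega
    rw [e] at hA4 hB4
    rw [hA4, hB4, h3]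
  -- downward induction
  have main : ∀ k : ℕ, ∀ j : ℕ, 2 ≤ j → j + k = N - 2 → v₁ (N, j) = v₂ (N, j) := by
    intro k
    induction k using Nat.strong_induction_on with
    | _ k ih =>
      intro j hj2 hjk
      by_cases hk0 : k = 0
      · have hj : j = N - 2 := by omega
        rw [hj, hA2, hB2]
      by_cases hk1 : k = 1
      · have hj : j = N - 3 := by omega
        rw [hj]; exact h3
      by_cases hk2 : k = 2
      · have hj : j = N - 4 := by omega
        rw [hj]; exact h4
      · have hk3 : 3 ≤ k := by omega
        have hjN : j ≤ N - 5 := by omega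
        have e1 : v₁ (N, j + 1) = v₂ (N, j + 1) :=
          ih (k - 1) (by omega) (j + 1) (by omega) (by omega)
        have e2 : v₁ (N, j + 2) = v₂ (N, j + 2) :=
          ih (k - 2) (by omega) (j + 2) (by omega) (by omega)
        have r0 : v₁ (N, j) = 5/6 * v₁ (N, j + 1) :=
          eq_a11_mid hN hv₁ hj2 (by omega)
            (hd₁a j (by omega) (by omega) (by omega))
        have r1 : v₁ (N, j + 1) = 5/6 * v₁ (N, j + 2) :=
          eq_a11_mid hN hv₁ (by omega) (by omega)
            (hd₁a (j + 1) (by omega) (by omega) (by omega))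
        have r2 := eq_a12_mid hN hv₂ hj2 (by omega)
          (hd₂b j (Or.inl ⟨hj2, hjN⟩))
        rw [← e1, ← e2] at r2
        linarith
  intro j hj
  rcases hj with ⟨hj2, hjN⟩ | rfl
  · exact main (N - 2 - j) j hj2 (by omega)
  · rw [hA, hB]


end AuxMDP
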